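/- arXiv:2501.00612 — 6 statements merged into one kernel-verified Lean document; each statement's English description precedes it below -/
import Mathlib

section
/- For all p_s, p_q with 0 < p_s ≤ p_q < 1, the semantic communication limit satisfies Λ(p_s, 1 - p_q) ≤ H₂(p_s): when the receiver knows nothing (p_r = 1), the optimal semantic communication cost is at most the classical cost H₂(p_s) of losslessly transmitting the sender's full knowledge. -/
/-- The logical semantic entropy `Λ(a,b) = a·log₂((a+b)/a) + b·log₂((a+b)/b)`. -/
noncomputable def lse (a b : ℝ) : ℝ :=
  a * Real.logb 2 ((a + b) / a) + b * Real.logb 2 ((a + b) / b)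

/-- The binary entropy function `H₂(p) = -p·log₂ p - (1-p)·log₂(1-p)`. -/
noncomputable def binEnt (p : ℝ) : ℝ :=
  -p * Real.logb 2 p - (1 - p) * Real.logb 2 (1 - p)

open Real in
lemma g_monotone (a : ℝ) (ha : 0 < a) :
    MonotoneOn (fun x : ℝ => (a + x) * Real.log (a + x) - x * Real.log x)
      (Set.Ici (0:ℝ)) := by
  have hcont : ContinuousOn (fun x : ℝ => (a + x) * Real.log (a + x) - x * Real.log x)
      (Set.Ici (0:ℝ)) := by
    apply ContinuousOn.sub
    · exact (Real.continuous_mul_log.comp (continuous_const.add continuous_id)).continuousOn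
    · exact Real.continuous_mul_log.continuousOn
  have key : StrictMonoOn (fun x : ℝ => (a + x) * Real.log (a + x) - x * Real.log x)
      (Set.Ici (0:ℝ)) := by
    apply StrictMonoOn.mono (s := Set.Ici (0:ℝ)) ?_ (le_refl _)
    apply strictMonoOn_of_deriv_pos (convex_Ici 0) hcont
    intro x hx
    rw [interior_Ici] at hx
    have hx0 : (0:ℝ) < x := hx
    have hax : (0:ℝ) < a + x := by linarith
    have h1 : HasDerivAt (fun x : ℝ => (a + x) * Real.log (a + x))
        (Real.log (a + x) + 1) x := by
      have := (Real.hasDerivAt_mul_log (x := a + x) (ne_of_gt hax)).comp x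
        ((hasDerivAt_id x).const_add a)
      simpa [Function.comp_def] using this
    have h2 : HasDerivAt (fun x : ℝ => x * Real.log x) (Real.log x + 1) x :=
      Real.hasDerivAt_mul_log (ne_of_gt hx0)
    have h3 : HasDerivAt (fun x : ℝ => (a + x) * Real.log (a + x) - x * Real.log x)
        ((Real.log (a + x) + 1) - (Real.log x + 1)) x := h1.sub h2
    rw [h3.deriv]
    have : Real.log x < Real.log (a + x) := Real.log_lt_log hx0 (by linarith)
    linarith
  exact key.monotoneOn

/-- for `0 < p_s ≤ p_q < 1`, `Λ(p_s, 1 - p_q) ≤ H₂(p_s)`. -/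
theorem lse_le_binEnt_sender (ps pq : ℝ) (hs : 0 < ps) (hsq : ps ≤ pq) (hq : pq < 1) :
    lse ps (1 - pq) ≤ binEnt ps := by
  set a := ps
  set b := 1 - pq with hb_def
  set c := 1 - ps with hc_def
  have hb : 0 < b := by simp [hb_def]; linarith
  have hc : 0 < c := by simp [hc_def]; linarith
  have hbc : b ≤ c := by simp [hb_def, hc_def]; linarith
  have hab : 0 < a + b := by linarith
  have hac : a + c = 1 := by simp [hc_def, a]
  have hlog2 : (0:ℝ) < Real.log 2 := Real.log_pos (by norm_num)
  have key := g_monotone a hs (Set.mem_Ici.2 hb.le) (Set.mem_Ici.2 hc.le) hbc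
  simp only at key
  -- rewrite lse
  have hlse : lse a b = ((a + b) * Real.log (a + b) - a * Real.log a
      - b * Real.log b) / Real.log 2 := by
    unfold lse
    rw [Real.logb, Real.logb, Real.log_div (ne_of_gt hab) (ne_of_gt hs),
      Real.log_div (ne_of_gt hab) (ne_of_gt hb)]
    field_simp
    ring
  have hbin : binEnt a = ((a + c) * Real.log (a + c) - a * Real.log a
      - c * Real.log c) / Real.log 2 := by
    unfold binEnt
    rw [hac]
    simp only [Real.log_one, Real.logb, ← hc_def]
    field_simp
    ring
  rw [hlse, hbin]
  exact div_le_div_of_nonneg_right (by linarith) hlog2.le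
end

section
/- For all p_s, p_q with 0 < p_s ≤ p_q < 1, the semantic communication limit satisfies Λ(p_s, 1 - p_q) ≤ H₂(p_q): when the receiver knows nothing (p_r = 1), the optimal semantic communication cost is at most the classical cost H₂(p_q) of losslessly transmitting the query itself. -/
/-- Key monotonicity: `a ↦ a · log((a+b)/a)` is increasing for `a > 0`. -/
lemma mul_log_mono {a₁ a₂ b : ℝ} (h1 : 0 < a₁) (h12 : a₁ ≤ a₂) (hb : 0 < b) :
    a₁ * Real.log ((a₁ + b) / a₁) ≤ a₂ * Real.log ((a₂ + b) / a₂) := by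
  have h2 : 0 < a₂ := lt_of_lt_of_le h1 h12
  have hs : (0:ℝ) < b / a₂ := div_pos hb h2
  have hp : 1 ≤ a₂ / a₁ := (one_le_div h1).mpr h12
  have hbern : 1 + (a₂ / a₁) * (b / a₂) ≤ (1 + b / a₂) ^ (a₂ / a₁) :=
    one_add_mul_self_le_rpow_one_add (by linarith) hp
  have heq : (a₂ / a₁) * (b / a₂) = b / a₁ := by
    field_simp
  have key : 1 + b / a₁ ≤ (1 + b / a₂) ^ (a₂ / a₁) := by
    rw [← heq]; exact hbern
  have hpos1 : (0:ℝ) < 1 + b / a₁ := by positivity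
  have hlog : Real.log (1 + b / a₁) ≤ (a₂ / a₁) * Real.log (1 + b / a₂) := by
    calc Real.log (1 + b / a₁) ≤ Real.log ((1 + b / a₂) ^ (a₂ / a₁)) :=
          Real.log_le_log hpos1 key
      _ = (a₂ / a₁) * Real.log (1 + b / a₂) := Real.log_rpow (by positivity) _
  have ha1 : (a₁ + b) / a₁ = 1 + b / a₁ := by field_simp
  have ha2 : (a₂ + b) / a₂ = 1 + b / a₂ := by field_simp
  rw [ha1, ha2]
  have := mul_le_mul_of_nonneg_left hlog h1.le
  calc a₁ * Real.log (1 + b / a₁) ≤ a₁ * ((a₂ / a₁) * Real.log (1 + b / a₂)) := this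
    _ = a₂ * Real.log (1 + b / a₂) := by field_simp

/-- for `0 < p_s ≤ p_q < 1`, `Λ(p_s, 1 - p_q) ≤ H₂(p_q)`. -/
theorem lse_le_binEnt_query (ps pq : ℝ) (hs : 0 < ps) (hsq : ps ≤ pq) (hq : pq < 1) :
    lse ps (1 - pq) ≤ binEnt pq := by
  set b := 1 - pq with hbdef
  have hb : 0 < b := by simp [hbdef]; linarith
  have hq0 : 0 < pq := lt_of_lt_of_le hs hsq
  have hlog2 : (0:ℝ) < Real.log 2 := Real.log_pos (by norm_num)
  -- binEnt pq = lse pq b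
  have hEq : binEnt pq = lse pq b := by
    have hsum : pq + b = 1 := by simp [hbdef]
    unfold binEnt lse
    rw [hsum]
    rw [one_div, one_div, Real.logb_inv, Real.logb_inv]
    ring
  rw [hEq]
  unfold lse
  have key1 : ps * Real.logb 2 ((ps + b) / ps) ≤ pq * Real.logb 2 ((pq + b) / pq) := by
    have := mul_log_mono hs hsq hb
    unfold Real.logb
    rw [mul_div_assoc', mul_div_assoc']
    gcongr
  have key2 : b * Real.logb 2 ((ps + b) / b) ≤ b * Real.logb 2 ((pq + b) / b) := by
    apply mul_le_mul_of_nonneg_left _ hb.le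
    have h1 : (0:ℝ) < (ps + b) / b := by positivity
    have h2 : (ps + b) / b ≤ (pq + b) / b := by
      gcongr
    unfold Real.logb
    have := Real.log_le_log h1 h2
    gcongr
  linarith
end

section
/- For all p_s, p_q, p_r with 0 < p_s ≤ p_q < p_r ≤ 1, helping the receiver prove a targeted query is never more expensive than conveying the sender's full knowledge: Λ(p_s, p_r - p_q) ≤ Λ(p_s, p_r - p_s), with strict inequality whenever p_s < p_q. -/
private noncomputable def lseF (a : ℝ) : ℝ → ℝ :=
  fun b => (a + b) * Real.log (a + b) - a * Real.log a - b * Real.log b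

private lemma lseF_hasDerivAt (a : ℝ) (ha : 0 < a) {b : ℝ} (hb : 0 < b) :
    HasDerivAt (lseF a) (Real.log (a + b) - Real.log b) b := by
  have hab : a + b ≠ 0 := by positivity
  have h1 : HasDerivAt (fun x : ℝ => (a + x) * Real.log (a + x))
      ((Real.log (a + b) + 1) * 1) b :=
    (Real.hasDerivAt_mul_log hab).comp b ((hasDerivAt_id b).const_add a)
  have h2 : HasDerivAt (fun x : ℝ => x * Real.log x) (Real.log b + 1) b :=
    Real.hasDerivAt_mul_log hb.ne'
  have := ((h1.sub_const (a * Real.log a)).sub h2)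
  exact this.congr_deriv (by ring)

private lemma lseF_strictMono (a : ℝ) (ha : 0 < a) :
    StrictMonoOn (lseF a) (Set.Ioi 0) := by
  apply strictMonoOn_of_deriv_pos (convex_Ioi 0)
  · intro x hx
    exact (lseF_hasDerivAt a ha hx).continuousAt.continuousWithinAt
  · intro x hx
    rw [interior_Ioi] at hx
    rw [(lseF_hasDerivAt a ha hx).deriv]
    have : x < a + x := by linarith
    have := Real.log_lt_log hx this
    linarith

private lemma lse_eq (a b : ℝ) (ha : 0 < a) (hb : 0 < b) :
    lse a b = lseF a b * (Real.log 2)⁻¹ := by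
  have hab : (0:ℝ) < a + b := by linarith
  unfold lse lseF Real.logb
  rw [Real.log_div hab.ne' ha.ne', Real.log_div hab.ne' hb.ne']
  field_simp
  ring

/-- for `0 < p_s ≤ p_q < p_r ≤ 1`, a targeted query is never more expensive
than conveying the sender's full knowledge, strictly cheaper when `p_s < p_q`. -/
theorem lse_query_le_full (ps pq pr : ℝ) (hs : 0 < ps) (hsq : ps ≤ pq)
    (hqr : pq < pr) (hr : pr ≤ 1) :
    lse ps (pr - pq) ≤ lse ps (pr - ps) ∧ (ps < pq → lse ps (pr - pq) < lse ps (pr - ps)) := by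
  have hb1 : (0:ℝ) < pr - pq := by linarith
  have hb2 : (0:ℝ) < pr - ps := by linarith
  have hlog2 : (0:ℝ) < (Real.log 2)⁻¹ := by
    have : (0:ℝ) < Real.log 2 := Real.log_pos (by norm_num)
    positivity
  rw [lse_eq ps _ hs hb1, lse_eq ps _ hs hb2]
  constructor
  · apply mul_le_mul_of_nonneg_right _ hlog2.le
    exact (lseF_strictMono ps hs).monotoneOn hb1 hb2 (by linarith)
  · intro h
    apply mul_lt_mul_of_pos_right _ hlog2
    exact lseF_strictMono ps hs hb1 hb2 (by linarith)
end

section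
/- Correcting misinformation costs at least as much as correcting ignorance when the receiver's kernel size is at most 1/2: for all p_s, p_r with 0 < p_s < p_r ≤ 1/2 and p_r + p_s < 1, the misinformation cost Λ(p_s, 1 - p_r - p_s) is greater than or equal to the ignorance cost Λ(p_s, p_r - p_s), with strict inequality when p_r < 1/2. -/
/-- Auxiliary function: `lse a x` times `log 2`, in natural logs. -/
noncomputable def lseAux (a x : ℝ) : ℝ :=
  (a + x) * Real.log (a + x) - a * Real.log a - x * Real.log x

lemma lse_eq_lseAux (a x : ℝ) (ha : 0 < a) (hx : 0 < x) :
    lse a x = lseAux a x / Real.log 2 := by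
  have hax : 0 < a + x := by linarith
  rw [lse, lseAux, Real.logb, Real.logb, Real.log_div hax.ne' ha.ne',
    Real.log_div hax.ne' hx.ne']
  field_simp
  ring

lemma lseAux_strictMono (a : ℝ) (ha : 0 < a) : StrictMonoOn (lseAux a) (Set.Ioi 0) := by
  have hc : ContinuousOn (lseAux a) (Set.Ioi 0) := by
    apply ContinuousOn.sub
    apply ContinuousOn.sub
    · exact (Real.continuous_mul_log.comp (continuous_const.add continuous_id)).continuousOn
    · exact continuousOn_const
    · exact Real.continuous_mul_log.continuousOn
  apply strictMonoOn_of_deriv_pos (convex_Ioi 0) hc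
  intro x hx
  rw [interior_Ioi] at hx
  have hx0 : (0:ℝ) < x := hx
  have hax : 0 < a + x := by linarith
  have h1 : HasDerivAt (fun y => (a + y) * Real.log (a + y))
      (Real.log (a + x) + 1) x := by
    have := (Real.hasDerivAt_mul_log hax.ne').comp x
      ((hasDerivAt_id x).const_add a)
    simpa [Function.comp_def] using this
  have h2 : HasDerivAt (lseAux a) (Real.log (a + x) + 1 - (Real.log x + 1)) x :=
    (h1.sub_const _).sub (Real.hasDerivAt_mul_log hx0.ne')
  rw [h2.deriv]
  have : Real.log x < Real.log (a + x) := Real.log_lt_log hx0 (by linarith)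
  linarith

lemma lse_lt_lse (a b c : ℝ) (ha : 0 < a) (hb : 0 < b) (hbc : b < c) :
    lse a b < lse a c := by
  have hc : 0 < c := lt_trans hb hbc
  rw [lse_eq_lseAux a b ha hb, lse_eq_lseAux a c ha hc]
  have h := lseAux_strictMono a ha (Set.mem_Ioi.mpr hb) (Set.mem_Ioi.mpr hc) hbc
  have hlog : (0:ℝ) < Real.log 2 := Real.log_pos (by norm_num)
  exact div_lt_div_of_pos_right h hlog

/-- correcting misinformation costs at least as much as correcting
ignorance when `p_r ≤ 1/2`, strictly more when `p_r < 1/2`. -/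
theorem lse_misinformation_ge_ignorance (ps pr : ℝ) (hs : 0 < ps) (hsr : ps < pr)
    (hr : pr ≤ 1 / 2) (hsum : pr + ps < 1) :
    lse ps (pr - ps) ≤ lse ps (1 - pr - ps) ∧
      (pr < 1 / 2 → lse ps (pr - ps) < lse ps (1 - pr - ps)) := by
  have hb : 0 < pr - ps := by linarith
  rcases lt_or_eq_of_le hr with h | h
  · have hlt : lse ps (pr - ps) < lse ps (1 - pr - ps) :=
      lse_lt_lse ps (pr - ps) (1 - pr - ps) hs hb (by linarith)
    exact ⟨hlt.le, fun _ => hlt⟩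
  · constructor
    · have : pr - ps = 1 - pr - ps := by linarith
      rw [this]
    · intro hlt; exact absurd h hlt.ne
end

section
/- Fix p_s with 0 < p_s < 1/2. Then the ratio of the misinformation cost to the ignorance cost, Λ(p_s, 1 - p_r - p_s) / Λ(p_s, p_r - p_s), tends to +∞ as p_r tends to p_s from the right: as the receiver becomes more opinionated, the relative cost of correcting misinformation versus ignorance grows without bound. -/
lemma lse_pos {a b : ℝ} (ha : 0 < a) (hb : 0 < b) : 0 < lse a b := by
  have h1 : 0 < Real.logb 2 ((a + b) / a) :=
    Real.logb_pos one_lt_two ((one_lt_div ha).2 (by linarith))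
  have h2 : 0 < Real.logb 2 ((a + b) / b) :=
    Real.logb_pos one_lt_two ((one_lt_div hb).2 (by linarith))
  have := mul_pos ha h1
  have := mul_pos hb h2
  unfold lse; linarith

lemma lse_continuousAt {a b : ℝ} (ha : 0 < a) (hb : 0 < b) :
    ContinuousAt (fun x => lse a x) b := by
  unfold lse
  have hab : (0:ℝ) < a + b := by linarith
  have c1 : ContinuousAt (fun x : ℝ => (a + x) / a) b :=
    (continuousAt_const.add continuousAt_id).div_const a
  have c2 : ContinuousAt (fun x : ℝ => (a + x) / x) b :=
    (continuousAt_const.add continuousAt_id).div continuousAt_id hb.ne'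
  have l1 : ContinuousAt (fun x : ℝ => Real.logb 2 ((a + x) / x)) b := by
    simp only [Real.logb]
    exact (c2.log (by positivity)).div_const _
  have l2 : ContinuousAt (fun x : ℝ => Real.logb 2 ((a + x) / a)) b := by
    simp only [Real.logb]
    exact (c1.log (by positivity)).div_const _
  exact (continuousAt_const.mul l2).add (continuousAt_id.mul l1)

lemma lse_tendsto_zero {a : ℝ} (ha : 0 < a) :
    Filter.Tendsto (fun b => lse a b) (nhdsWithin 0 (Set.Ioi 0)) (nhds 0) := by
  set F : ℝ → ℝ := fun b =>
    a * Real.logb 2 ((a + b) / a)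
      + ((a + b) * Real.log (a + b) - b * Real.log b - a * Real.log (a + b)) / Real.log 2 with hF
  have heq : (fun b => lse a b) =ᶠ[nhdsWithin 0 (Set.Ioi 0)] F := by
    filter_upwards [self_mem_nhdsWithin] with b hb
    have hb : (0:ℝ) < b := hb
    have hab : (0:ℝ) < a + b := by linarith
    unfold lse
    simp only [hF, Real.logb]
    rw [Real.log_div hab.ne' ha.ne', Real.log_div hab.ne' hb.ne']
    field_simp
    ring
  rw [Filter.tendsto_congr' heq]
  have hml : Continuous fun x : ℝ => x * Real.log x := Real.continuous_mul_log
  have c1 : ContinuousAt (fun b : ℝ => (a + b) * Real.log (a + b)) 0 :=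
    hml.continuousAt.comp (by fun_prop)
  have c2 : ContinuousAt (fun b : ℝ => b * Real.log b) 0 := hml.continuousAt
  have c3 : ContinuousAt (fun b : ℝ => Real.log (a + b)) 0 :=
    (Real.continuousAt_log (by simpa using ha.ne')).comp (by fun_prop)
  have c4 : ContinuousAt (fun b : ℝ => Real.logb 2 ((a + b) / a)) 0 := by
    simp only [Real.logb]
    have : ContinuousAt (fun b : ℝ => (a + b) / a) 0 :=
      (continuousAt_const.add continuousAt_id).div_const a
    exact (this.log (by simp [div_self ha.ne'])).div_const _
  have hc : ContinuousAt F 0 :=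
    (continuousAt_const.mul c4).add (((c1.sub c2).sub (continuousAt_const.mul c3)).div_const _)
  have h0 : F 0 = 0 := by
    simp only [hF]
    simp [div_self ha.ne', Real.logb_one]
  have := hc.tendsto
  rw [h0] at this
  exact this.mono_left nhdsWithin_le_nhds

/-- the ratio of the misinformation cost to the ignorance cost tends to
`+∞` as `p_r → p_s⁺`. -/
theorem lse_misinformation_ratio_tendsto_atTop (ps : ℝ) (hs0 : 0 < ps) (hs1 : ps < 1 / 2) :
    Filter.Tendsto (fun pr : ℝ => lse ps (1 - pr - ps) / lse ps (pr - ps))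
      (nhdsWithin ps (Set.Ioi ps)) Filter.atTop := by
  have h12 : (0:ℝ) < 1 - ps - ps := by linarith
  -- numerator tends to lse ps (1 - ps - ps) > 0
  have hnum : Filter.Tendsto (fun pr : ℝ => lse ps (1 - pr - ps)) (nhdsWithin ps (Set.Ioi ps))
      (nhds (lse ps (1 - ps - ps))) := by
    have hc : ContinuousAt (fun pr : ℝ => lse ps (1 - pr - ps)) ps :=
      (lse_continuousAt hs0 h12).comp (f := fun pr : ℝ => 1 - pr - ps) (by fun_prop)
    exact hc.tendsto.mono_left nhdsWithin_le_nhds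
  -- denominator tends to 0 within Ioi 0
  have hden : Filter.Tendsto (fun pr : ℝ => lse ps (pr - ps)) (nhdsWithin ps (Set.Ioi ps))
      (nhdsWithin 0 (Set.Ioi 0)) := by
    have hsub : Filter.Tendsto (fun pr : ℝ => pr - ps) (nhdsWithin ps (Set.Ioi ps))
        (nhdsWithin 0 (Set.Ioi 0)) := by
      rw [tendsto_nhdsWithin_iff]
      constructor
      · have : Filter.Tendsto (fun pr : ℝ => pr - ps) (nhds ps) (nhds (ps - ps)) :=
          (continuous_id.sub continuous_const).tendsto ps
        rw [sub_self] at this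
        exact this.mono_left nhdsWithin_le_nhds
      · filter_upwards [self_mem_nhdsWithin] with pr hpr
        exact sub_pos.2 (Set.mem_Ioi.1 hpr)
    rw [tendsto_nhdsWithin_iff]
    constructor
    · exact (lse_tendsto_zero hs0).comp hsub
    · filter_upwards [self_mem_nhdsWithin] with pr hpr
      exact lse_pos hs0 (sub_pos.2 (Set.mem_Ioi.1 hpr))
  have := Filter.Tendsto.pos_mul_atTop (lse_pos hs0 h12) hnum hden.inv_tendsto_nhdsGT_zero
  simpa [div_eq_mul_inv] using this
end

section
/- Soundness and completeness of entailment with respect to kernels: for all propositional formulas s and t over m variables, t is derivable from s in the Hilbert-style proof system (s ⊢ t) if and only if the kernel of s is a subset of the kernel of t, i.e., every valuation that makes s true also makes t true. -/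
/-- Propositional formulas over `m` variables `X₁, …, X_m`. -/
inductive PropForm (m : ℕ) : Type
  | var : Fin m → PropForm m
  | not : PropForm m → PropForm m
  | and : PropForm m → PropForm m → PropForm m
  | or  : PropForm m → PropForm m → PropForm m
  | imp : PropForm m → PropForm m → PropForm m

namespace PropForm

/-- Truth-table evaluation of a formula under a valuation `v : Fin m → Bool`. -/
def eval {m : ℕ} (v : Fin m → Bool) : PropForm m → Bool
  | var i => v i
  | not s => !(eval v s)
  | and s t => eval v s && eval v t
  | or s t => eval v s || eval v t
  | imp s t => !(eval v s) || eval v t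

/-- The kernel `⟦s⟧` of a formula `s`: the set of valuations that satisfy it. -/
def kernel {m : ℕ} (s : PropForm m) : Set (Fin m → Bool) :=
  {v | eval v s = true}

/-- A standard complete set of axiom schemes for classical propositional logic
(Hilbert style), covering implication, negation, conjunction and disjunction. -/
inductive Ax {m : ℕ} : PropForm m → Prop
  | ax1 (s t : PropForm m) : Ax (s.imp (t.imp s))
  | ax2 (s t u : PropForm m) : Ax ((s.imp (t.imp u)).imp ((s.imp t).imp (s.imp u)))
  | ax3 (s t : PropForm m) : Ax ((s.not.imp t.not).imp (t.imp s))
  | ax4 (s t : PropForm m) : Ax ((s.and t).imp s)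
  | ax5 (s t : PropForm m) : Ax ((s.and t).imp t)
  | ax6 (s t : PropForm m) : Ax (s.imp (t.imp (s.and t)))
  | ax7 (s t : PropForm m) : Ax (s.imp (s.or t))
  | ax8 (s t : PropForm m) : Ax (t.imp (s.or t))
  | ax9 (s t u : PropForm m) : Ax ((s.imp u).imp ((t.imp u).imp ((s.or t).imp u)))

/-- Hilbert-style derivability `h ⊢ t`: `t` is derivable from the hypothesis `h`
using the axiom schemes and modus ponens as the only inference rule. -/
inductive Derives {m : ℕ} (h : PropForm m) : PropForm m → Prop
  | ax {t : PropForm m} : Ax t → Derives h t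
  | hyp : Derives h h
  | mp {s t : PropForm m} : Derives h (s.imp t) → Derives h s → Derives h t

end PropForm


namespace PropForm

variable {m : ℕ}

/-- Derivability from a set of hypotheses. -/
inductive Prf (Γ : Set (PropForm m)) : PropForm m → Prop
  | ax {t : PropForm m} : Ax t → Prf Γ t
  | hyp {t : PropForm m} : t ∈ Γ → Prf Γ t
  | mp {s t : PropForm m} : Prf Γ (s.imp t) → Prf Γ s → Prf Γ t

theorem Prf.weaken {Γ Δ : Set (PropForm m)} {t : PropForm m} (p : Prf Γ t) (h : Γ ⊆ Δ) :
    Prf Δ t := by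
  induction p with
  | ax a => exact .ax a
  | hyp ht => exact .hyp (h ht)
  | mp _ _ ih1 ih2 => exact .mp ih1 ih2

theorem Prf.wk {Γ : Set (PropForm m)} {a t : PropForm m} (p : Prf Γ t) :
    Prf (insert a Γ) t := p.weaken (Set.subset_insert _ _)

theorem Prf.h0 {Γ : Set (PropForm m)} {a : PropForm m} : Prf (insert a Γ) a :=
  .hyp (Set.mem_insert _ _)

theorem Prf.imp_self (Γ : Set (PropForm m)) (a : PropForm m) : Prf Γ (a.imp a) :=
  .mp (.mp (.ax (.ax2 a (a.imp a) a)) (.ax (.ax1 _ _))) (.ax (.ax1 _ _))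

theorem Prf.k {Γ : Set (PropForm m)} {t : PropForm m} (p : Prf Γ t) (a : PropForm m) :
    Prf Γ (a.imp t) := .mp (.ax (.ax1 _ _)) p

theorem Prf.ded {Γ : Set (PropForm m)} {a t : PropForm m} (p : Prf (insert a Γ) t) :
    Prf Γ (a.imp t) := by
  induction p with
  | ax h => exact (Prf.ax h).k a
  | @hyp u hu =>
    rcases Set.mem_insert_iff.1 hu with h | h
    · exact h ▸ Prf.imp_self Γ a
    · exact (Prf.hyp h).k a
  | mp _ _ ih1 ih2 => exact .mp (.mp (.ax (.ax2 _ _ _)) ih1) ih2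

/-- ex falso: ¬a → (a → b) -/
theorem Prf.efq (Γ : Set (PropForm m)) (a b : PropForm m) :
    Prf Γ (a.not.imp (a.imp b)) := by
  apply Prf.ded; apply Prf.ded
  exact .mp (.mp (.ax (.ax3 b a)) ((Prf.h0.wk : Prf _ a.not).k b.not)) Prf.h0

/-- double negation elimination -/
theorem Prf.dne (Γ : Set (PropForm m)) (a : PropForm m) : Prf Γ (a.not.not.imp a) := by
  apply Prf.ded
  have h1 : Prf (insert a.not.not Γ) (a.not.imp (a.imp a).not) :=
    .mp (Prf.efq _ a.not (a.imp a).not) Prf.h0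
  exact .mp (.mp (.ax (.ax3 a (a.imp a))) h1) (Prf.imp_self _ _)

/-- double negation introduction -/
theorem Prf.dni (Γ : Set (PropForm m)) (a : PropForm m) : Prf Γ (a.imp a.not.not) :=
  .mp (.ax (.ax3 a.not.not a)) (Prf.dne Γ a.not)

/-- contraposition -/
theorem Prf.contra (Γ : Set (PropForm m)) (a b : PropForm m) :
    Prf Γ ((a.imp b).imp (b.not.imp a.not)) := by
  apply Prf.ded; apply Prf.ded
  -- context: a.imp b, b.not ; goal a.not
  set Δ := insert a.not.not (insert b.not (insert (a.imp b) Γ)) with hΔ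
  have key : Prf Δ ((a.imp a).not) := by
    have ha : Prf Δ a := .mp (Prf.dne Δ a) Prf.h0
    have hb : Prf Δ b := .mp ((Prf.h0).wk.wk : Prf Δ (a.imp b)) ha
    exact .mp (.mp (Prf.efq Δ b ((a.imp a).not)) ((Prf.h0).wk : Prf Δ b.not)) hb
  exact .mp (.mp (.ax (.ax3 a.not (a.imp a))) key.ded) (Prf.imp_self _ _)

/-- consequentia mirabilis (negative form): (a → ¬a) → ¬a -/
theorem Prf.cm (Γ : Set (PropForm m)) (a : PropForm m) :
    Prf Γ ((a.imp a.not).imp a.not) := by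
  apply Prf.ded
  set Δ := insert a.not.not (insert (a.imp a.not) Γ) with hΔ
  have key : Prf Δ ((a.imp a).not) := by
    have ha : Prf Δ a := .mp (Prf.dne Δ a) Prf.h0
    have hna : Prf Δ a.not := .mp ((Prf.h0).wk : Prf Δ (a.imp a.not)) ha
    exact .mp (.mp (Prf.efq Δ a ((a.imp a).not)) hna) ha
  exact .mp (.mp (.ax (.ax3 a.not (a.imp a))) key.ded) (Prf.imp_self _ _)

/-- case analysis -/
theorem Prf.cases {Γ : Set (PropForm m)} {a t : PropForm m}
    (h1 : Prf Γ (a.imp t)) (h2 : Prf Γ (a.not.imp t)) : Prf Γ t := by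
  have hnt : Prf Γ (t.not.imp t) := by
    apply Prf.ded
    have hca : Prf (insert t.not Γ) (t.not.imp a.not) :=
      .mp (Prf.contra _ a t) h1.wk
    exact .mp h2.wk (.mp hca Prf.h0)
  have h3 : Prf Γ (t.not.imp t.not.not) := by
    apply Prf.ded
    exact .mp (Prf.dni _ t) (.mp hnt.wk Prf.h0)
  exact .mp (Prf.dne Γ t) (.mp (Prf.cm Γ t.not) h3)

end PropForm

namespace PropForm2
open PropForm
variable {m : ℕ}

/-- literal of `t` under valuation `v` -/
def lit (v : Fin m → Bool) (t : PropForm m) : PropForm m := if eval v t then t else t.not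

theorem kalmar (v : Fin m → Bool) (t : PropForm m) (Γ : Set (PropForm m))
    (hΓ : ∀ i : Fin m, lit v (var i) ∈ Γ) : Prf Γ (lit v t) := by
  induction t with
  | var i => exact .hyp (hΓ i)
  | not s ih =>
    by_cases hs : eval v s
    · simpa [lit, eval, hs] using Prf.mp (Prf.dni Γ s) (by simpa [lit, hs] using ih)
    · simp only [Bool.not_eq_true] at hs
      simpa [lit, eval, hs] using (by simpa [lit, hs] using ih : Prf Γ s.not)
  | and s u ihs ihu =>
    by_cases hs : eval v s <;> by_cases hu : eval v u
    · have h1 : Prf Γ s := by simpa [lit, hs] using ihs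
      have h2 : Prf Γ u := by simpa [lit, hu] using ihu
      simpa [lit, eval, hs, hu] using Prf.mp (Prf.mp (.ax (.ax6 s u)) h1) h2
    · simp only [Bool.not_eq_true] at hu
      have h2 : Prf Γ u.not := by simpa [lit, hu] using ihu
      simpa [lit, eval, hs, hu] using
        Prf.mp (Prf.mp (Prf.contra Γ (s.and u) u) (.ax (.ax5 s u))) h2
    · simp only [Bool.not_eq_true] at hs
      have h1 : Prf Γ s.not := by simpa [lit, hs] using ihs
      simpa [lit, eval, hs] using
        Prf.mp (Prf.mp (Prf.contra Γ (s.and u) s) (.ax (.ax4 s u))) h1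
    · simp only [Bool.not_eq_true] at hs
      have h1 : Prf Γ s.not := by simpa [lit, hs] using ihs
      simpa [lit, eval, hs] using
        Prf.mp (Prf.mp (Prf.contra Γ (s.and u) s) (.ax (.ax4 s u))) h1
  | or s u ihs ihu =>
    by_cases hs : eval v s
    · have h1 : Prf Γ s := by simpa [lit, hs] using ihs
      simpa [lit, eval, hs] using Prf.mp (.ax (.ax7 s u)) h1
    · simp only [Bool.not_eq_true] at hs
      have h1 : Prf Γ s.not := by simpa [lit, hs] using ihs
      by_cases hu : eval v u
      · have h2 : Prf Γ u := by simpa [lit, hu] using ihu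
        simpa [lit, eval, hs, hu] using Prf.mp (.ax (.ax8 s u)) h2
      · simp only [Bool.not_eq_true] at hu
        have h2 : Prf Γ u.not := by simpa [lit, hu] using ihu
        have f1 : Prf Γ (s.imp (s.or u).not) := .mp (Prf.efq Γ s _) h1
        have f2 : Prf Γ (u.imp (s.or u).not) := .mp (Prf.efq Γ u _) h2
        have f3 : Prf Γ ((s.or u).imp (s.or u).not) :=
          .mp (.mp (.ax (.ax9 s u (s.or u).not)) f1) f2
        simpa [lit, eval, hs, hu] using Prf.mp (Prf.cm Γ (s.or u)) f3
  | imp s u ihs ihu =>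
    by_cases hs : eval v s
    · have h1 : Prf Γ s := by simpa [lit, hs] using ihs
      by_cases hu : eval v u
      · have h2 : Prf Γ u := by simpa [lit, hu] using ihu
        simpa [lit, eval, hs, hu] using h2.k s
      · simp only [Bool.not_eq_true] at hu
        have h2 : Prf Γ u.not := by simpa [lit, hu] using ihu
        have f1 : Prf Γ ((s.imp u).imp u) := by
          apply Prf.ded
          exact .mp Prf.h0 h1.wk
        simpa [lit, eval, hs, hu] using
          Prf.mp (Prf.mp (Prf.contra Γ (s.imp u) u) f1) h2
    · simp only [Bool.not_eq_true] at hs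
      have h1 : Prf Γ s.not := by simpa [lit, hs] using ihs
      simpa [lit, eval, hs] using Prf.mp (Prf.efq Γ s u) h1

/-- the set of literals of the first `k` variables -/
def litCtx (v : Fin m → Bool) (k : ℕ) : Set (PropForm m) :=
  {p | ∃ i : Fin m, (i : ℕ) < k ∧ p = lit v (var i)}

theorem litCtx_update (v : Fin m → Bool) (k : ℕ) (j : Fin m) (hj : k ≤ (j : ℕ)) (b : Bool) :
    litCtx (Function.update v j b) k = litCtx v k := by
  unfold litCtx
  ext p
  constructor <;> rintro ⟨i, hik, rfl⟩ <;> refine ⟨i, hik, ?_⟩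
  all_goals
    have hne : i ≠ j := by
      intro h; subst h; omega
    simp only [lit, eval, Function.update_of_ne hne]; congr

theorem litCtx_succ (v : Fin m → Bool) (k : ℕ) (hk : k < m) :
    litCtx v (k + 1) = insert (lit v (var ⟨k, hk⟩)) (litCtx v k) := by
  unfold litCtx
  ext p
  simp only [Set.mem_insert_iff, Set.mem_setOf_eq]
  constructor
  · rintro ⟨i, hik, rfl⟩
    rcases Nat.lt_succ_iff_lt_or_eq.1 hik with h | h
    · exact Or.inr ⟨i, h, rfl⟩
    · left
      have : i = (⟨k, hk⟩ : Fin m) := Fin.ext h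
      rw [this]
  · rintro (rfl | ⟨i, hik, rfl⟩)
    · exact ⟨⟨k, hk⟩, by simp, rfl⟩
    · exact ⟨i, by omega, rfl⟩

theorem elim_vars (t : PropForm m) (taut : ∀ v, eval v t = true) :
    ∀ j : ℕ, ∀ v : Fin m → Bool, Prf (litCtx v (m - j)) t := by
  intro j
  induction j with
  | zero =>
    intro v
    have h := kalmar v t (litCtx v m) (fun i => ⟨i, i.isLt, rfl⟩)
    simpa [lit, taut v] using h
  | succ j ih =>
    intro v
    by_cases hm : m ≤ j
    · have : m - (j+1) = m - j := by omega
      rw [this]; exact ih v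
    · push_neg at hm
      set k := m - (j + 1) with hk
      have hkm : k < m := by omega
      have hkj : m - j = k + 1 := by omega
      have hvar : ∀ b : Bool, Prf (insert (lit (Function.update v ⟨k, hkm⟩ b) (var ⟨k, hkm⟩))
          (litCtx v k)) t := by
        intro b
        have h := ih (Function.update v ⟨k, hkm⟩ b)
        rw [hkj, litCtx_succ _ k hkm, litCtx_update v k ⟨k, hkm⟩ (le_refl _) b] at h
        exact h
      have h1 := hvar true
      have h0 := hvar false
      simp only [lit, eval, Function.update_self] at h1 h0
      exact Prf.cases h1.ded h0.ded

theorem taut_prf (t : PropForm m) (taut : ∀ v, eval v t = true) :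
    Prf (∅ : Set (PropForm m)) t := by
  have h := elim_vars t taut m (fun _ => true)
  have he : litCtx (fun _ => true : Fin m → Bool) (m - m) = (∅ : Set (PropForm m)) := by
    ext p; simp [litCtx, Nat.sub_self]
  rwa [he] at h

end PropForm2

namespace PropForm2
open PropForm
variable {m : ℕ}

theorem ax_eval (v : Fin m → Bool) {t : PropForm m} (h : Ax t) : eval v t = true := by
  rcases h <;> first
    | (rename_i s t u
       simp only [eval]
       cases eval v s <;> cases eval v t <;> cases eval v u <;> rfl)
    | (rename_i s t
       simp only [eval]
       cases eval v s <;> cases eval v t <;> rfl)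

theorem derives_sound {s t : PropForm m} (h : Derives s t) (v : Fin m → Bool)
    (hs : eval v s = true) : eval v t = true := by
  induction h with
  | ax a => exact ax_eval v a
  | hyp => exact hs
  | mp _ _ ih1 ih2 =>
    simp only [eval, Bool.or_eq_true, Bool.not_eq_true'] at ih1
    rcases ih1 with h | h
    · rw [ih2] at h; cases h
    · exact h

theorem prf_to_derives {s t : PropForm m} (h : Prf ({s} : Set (PropForm m)) t) :
    Derives s t := by
  induction h with
  | ax a => exact .ax a
  | hyp ht => rw [Set.mem_singleton_iff] at ht; exact ht ▸ Derives.hyp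
  | mp _ _ ih1 ih2 => exact .mp ih1 ih2

theorem derives_complete {s t : PropForm m} (h : ∀ v, eval v s = true → eval v t = true) :
    Derives s t := by
  have taut : ∀ v : Fin m → Bool, eval v (s.imp t) = true := by
    intro v
    simp only [eval, Bool.or_eq_true, Bool.not_eq_true']
    cases hs : eval v s
    · exact Or.inl rfl
    · exact Or.inr (h v hs)
  have h1 : Prf ({s} : Set (PropForm m)) (s.imp t) :=
    (taut_prf _ taut).weaken (Set.empty_subset _)
  exact prf_to_derives (Prf.mp h1 (Prf.hyp rfl))

end PropForm2


/-- soundness and completeness of entailment with respect to kernels: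
`s ⊢ t` iff every valuation making `s` true also makes `t` true. -/
theorem derives_iff_kernel_subset {m : ℕ} (s t : PropForm m) :
    PropForm.Derives s t ↔ PropForm.kernel s ⊆ PropForm.kernel t := by
  constructor
  · intro h v hv
    exact PropForm2.derives_sound h v hv
  · intro h
    exact PropForm2.derives_complete fun v hv => h hv
end
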